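/- Let G = (V,E) be a finite simple graph and let G_r be the graph obtained from G by subdividing each edge e ∈ E with an even number 2k_e of new (auxiliary) vertices, and let m = Σ_{e∈E} k_e. Then G has a vertex cover of size k if and only if G_r has a vertex cover of size k + m. -/

import Mathlib

open SimpleGraph Finset

/-- A set of vertices covering every edge of a graph. -/
def IsVertexCover {W : Type*} (G : SimpleGraph W) (C : Finset W) : Prop :=
  ∀ u v, G.Adj u v → u ∈ C ∨ v ∈ C

/-- The relation generating the subdivision of the graph with oriented edge set `D`,
in which the edge `e ∈ D` is subdivided by the `2 * k e` internal vertices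
`(e, 0), …, (e, 2 * k e - 1)` (for `k e = 0` the edge is kept as is). -/
def subdivRel {V : Type*} (D : Finset (V × V)) (k : V × V → ℕ) :
    (V ⊕ ((V × V) × ℕ)) → (V ⊕ ((V × V) × ℕ)) → Prop
  | Sum.inl u, Sum.inl v => (u, v) ∈ D ∧ k (u, v) = 0
  | Sum.inl u, Sum.inr (e, i) =>
      e ∈ D ∧ i < 2 * k e ∧ ((u = e.1 ∧ i = 0) ∨ (u = e.2 ∧ i + 1 = 2 * k e))
  | Sum.inr (e, i), Sum.inr (f, j) => e = f ∧ e ∈ D ∧ j = i + 1 ∧ j < 2 * k e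
  | Sum.inr _, Sum.inl _ => False

/-- The subdivision graph `G_r`: every oriented edge `e ∈ D` is replaced by a path
through `2 * k e` new internal vertices. -/
def subdivGraph {V : Type*} (D : Finset (V × V)) (k : V × V → ℕ) :
    SimpleGraph (V ⊕ ((V × V) × ℕ)) :=
  SimpleGraph.fromRel (subdivRel D k)

/-- G has a vertex cover of size k iff its subdivision G_r (each edge
subdivided by an even number `2 * k e` of auxiliary vertices) has a vertex cover of size
`k + m`, where `m = Σ_e k e`. -/

lemma pathA (S : Finset ℕ) : ∀ n : ℕ, (∀ i, i + 1 < n → i ∈ S ∨ i + 1 ∈ S) →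
    n / 2 ≤ (S.filter (· < n)).card := by
  intro n
  induction n using Nat.strong_induction_on with
  | _ n ih =>
    match n with
    | 0 => intro _; simp
    | 1 => intro _; simp
    | n + 2 =>
      intro h
      have h2 := ih n (by omega) (fun i hi => h i (by omega))
      have hnot : ∀ a : ℕ, n ≤ a → a ∉ S.filter (· < n) := by
        intro a hle hmem
        have := (Finset.mem_filter.1 hmem).2
        omega
      obtain ha | ha := h n (by omega)
      · have hsub : insert n (S.filter (· < n)) ⊆ S.filter (· < n + 2) := by
          intro x hx
          rcases Finset.mem_insert.1 hx with rfl | hx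
          · exact Finset.mem_filter.2 ⟨ha, by omega⟩
          · obtain ⟨h1, h3⟩ := Finset.mem_filter.1 hx
            exact Finset.mem_filter.2 ⟨h1, by omega⟩
        have hc := Finset.card_le_card hsub
        rw [Finset.card_insert_of_notMem (hnot n le_rfl)] at hc
        omega
      · have hsub : insert (n+1) (S.filter (· < n)) ⊆ S.filter (· < n + 2) := by
          intro x hx
          rcases Finset.mem_insert.1 hx with rfl | hx
          · exact Finset.mem_filter.2 ⟨ha, by omega⟩
          · obtain ⟨h1, h3⟩ := Finset.mem_filter.1 hx
            exact Finset.mem_filter.2 ⟨h1, by omega⟩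
        have hc := Finset.card_le_card hsub
        rw [Finset.card_insert_of_notMem (hnot (n+1) (by omega))] at hc
        omega

lemma pathB : ∀ (t : ℕ) (S : Finset ℕ), (∀ i, i + 1 < 2*t+2 → i ∈ S ∨ i + 1 ∈ S) →
    0 ∈ S → 2*t+1 ∈ S → t + 2 ≤ (S.filter (· < 2*t+2)).card := by
  intro t
  induction t with
  | zero =>
    intro S _ h0 h1
    have hsub : ({0, 1} : Finset ℕ) ⊆ S.filter (· < 2) := by
      intro x hx
      rcases Finset.mem_insert.1 hx with rfl | hx
      · exact Finset.mem_filter.2 ⟨h0, by omega⟩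
      · rw [Finset.mem_singleton] at hx
        subst hx
        exact Finset.mem_filter.2 ⟨h1, by omega⟩
    have := Finset.card_le_card hsub
    simpa using this
  | succ t ih =>
    intro S hcov h0 hlast
    have hlast' : 2*t+3 ∈ S := by
      have he : 2*(t+1)+1 = 2*t+3 := by omega
      rwa [he] at hlast
    have hnot : ∀ a : ℕ, 2*t+2 ≤ a → a ∉ S.filter (· < 2*t+2) := by
      intro a hle hmem
      have := (Finset.mem_filter.1 hmem).2
      omega
    obtain ha | ha := hcov (2*t+1) (by omega)
    · -- 2t+1 ∈ S, use IH
      have hIH := ih S (fun i hi => hcov i (by omega)) h0 ha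
      have hsub : insert (2*t+3) (S.filter (· < 2*t+2)) ⊆ S.filter (· < 2*(t+1)+2) := by
        intro x hx
        rcases Finset.mem_insert.1 hx with rfl | hx
        · exact Finset.mem_filter.2 ⟨hlast', by omega⟩
        · obtain ⟨h1, h3⟩ := Finset.mem_filter.1 hx
          exact Finset.mem_filter.2 ⟨h1, by omega⟩
      have hc := Finset.card_le_card hsub
      rw [Finset.card_insert_of_notMem (hnot (2*t+3) (by omega))] at hc
      omega
    · -- 2t+2 ∈ S, use pathA
      have hA := pathA S (2*t+2) (fun i hi => hcov i (by omega))
      have hsub : insert (2*t+2) (insert (2*t+3) (S.filter (· < 2*t+2))) ⊆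
          S.filter (· < 2*(t+1)+2) := by
        intro x hx
        rcases Finset.mem_insert.1 hx with rfl | hx
        · exact Finset.mem_filter.2 ⟨ha, by omega⟩
        rcases Finset.mem_insert.1 hx with rfl | hx
        · exact Finset.mem_filter.2 ⟨hlast', by omega⟩
        · obtain ⟨h1, h3⟩ := Finset.mem_filter.1 hx
          exact Finset.mem_filter.2 ⟨h1, by omega⟩
      have hc := Finset.card_le_card hsub
      rw [Finset.card_insert_of_notMem, Finset.card_insert_of_notMem (hnot (2*t+3) (by omega))] at hc
      · omega
      · intro hmem
        rcases Finset.mem_insert.1 hmem with h | h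
        · omega
        · exact hnot (2*t+2) (by omega) h

lemma fwd_aux {V : Type*} [Fintype V] [DecidableEq V] (G : SimpleGraph V)
    (D : Finset (V × V))
    (hD : ∀ u v, G.Adj u v ↔ ((u, v) ∈ D ∨ (v, u) ∈ D))
    (hD1 : ∀ p ∈ D, p.1 ≠ p.2) (hD2 : ∀ p ∈ D, (p.2, p.1) ∉ D)
    (k : V × V → ℕ) (m : ℕ) (hm : m = ∑ p ∈ D, k p) (kk : ℕ)
    (h : ∃ C : Finset V, _root_.IsVertexCover G C ∧ C.card ≤ kk) :
      (∃ C : Finset (V ⊕ ((V × V) × ℕ)),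
        _root_.IsVertexCover (subdivGraph D k) C ∧ C.card ≤ kk + m) := by
  classical
  obtain ⟨C, hC, hCcard⟩ := h
  set f : (V × V) → Finset (V ⊕ ((V × V) × ℕ)) := fun e =>
    (Finset.range (k e)).image
      (fun j => Sum.inr (e, 2 * j + (if e.1 ∈ C then 1 else 0))) with hf
  refine ⟨C.image Sum.inl ∪ D.biUnion f, ?_, ?_⟩
  · have hmemV : ∀ v ∈ C, (Sum.inl v : V ⊕ ((V × V) × ℕ)) ∈ C.image Sum.inl ∪ D.biUnion f :=
      fun v hv => Finset.mem_union.2 (Or.inl (Finset.mem_image_of_mem _ hv))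
    have hmemf : ∀ e ∈ D, ∀ j < k e,
        (Sum.inr (e, 2 * j + (if e.1 ∈ C then 1 else 0)) : V ⊕ ((V × V) × ℕ)) ∈
          C.image Sum.inl ∪ D.biUnion f := by
      intro e he j hj
      exact Finset.mem_union.2 (Or.inr (Finset.mem_biUnion.2
        ⟨e, he, Finset.mem_image_of_mem _ (Finset.mem_range.2 hj)⟩))
    have key : ∀ a b, subdivRel D k a b → a ∈ C.image Sum.inl ∪ D.biUnion f ∨
        b ∈ C.image Sum.inl ∪ D.biUnion f := by
      rintro (u | ⟨e, i⟩) (v | ⟨e', i'⟩) h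
      · obtain ⟨hD', hk⟩ := h
        obtain hu | hv := hC u v ((hD u v).2 (Or.inl hD'))
        · exact Or.inl (hmemV u hu)
        · exact Or.inr (hmemV v hv)
      · obtain ⟨heD, hi, hcase⟩ := h
        rcases hcase with ⟨rfl, rfl⟩ | ⟨rfl, hlast⟩
        · by_cases hu : e'.1 ∈ C
          · exact Or.inl (hmemV _ hu)
          · right
            have h1 := hmemf e' heD 0 (by omega)
            rw [if_neg hu] at h1
            simpa using h1
        · by_cases hu : e'.1 ∈ C
          · right
            have h1 := hmemf e' heD (k e' - 1) (by omega)
            rw [if_pos hu] at h1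
            have he : i' = 2 * (k e' - 1) + 1 := by omega
            rwa [he]
          · have hadj : G.Adj e'.1 e'.2 := (hD _ _).2 (Or.inl (by rwa [Prod.mk.eta]))
            obtain h1 | h1 := hC _ _ hadj
            · exact absurd h1 hu
            · exact Or.inl (hmemV _ h1)
      · exact h.elim
      · obtain ⟨rfl, heD, rfl, hj⟩ := h
        by_cases hu : e.1 ∈ C
        · rcases Nat.even_or_odd i with ⟨a, ha⟩ | ⟨a, ha⟩
          · right
            have h1 := hmemf e heD a (by omega)
            rw [if_pos hu] at h1
            have he : i + 1 = 2 * a + 1 := by omega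
            rwa [he]
          · left
            have h1 := hmemf e heD a (by omega)
            rw [if_pos hu] at h1
            have he : i = 2 * a + 1 := by omega
            rwa [he]
        · rcases Nat.even_or_odd i with ⟨a, ha⟩ | ⟨a, ha⟩
          · left
            have h1 := hmemf e heD a (by omega)
            rw [if_neg hu] at h1
            have he : i = 2 * a + 0 := by omega
            rwa [he]
          · right
            have h1 := hmemf e heD (a + 1) (by omega)
            rw [if_neg hu] at h1
            have he : i + 1 = 2 * (a + 1) + 0 := by omega
            rwa [he]
    intro a b hab
    rw [subdivGraph, SimpleGraph.fromRel_adj] at hab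
    obtain ⟨-, h | h⟩ := hab
    · exact key a b h
    · exact (key b a h).symm
  · have h1 := Finset.card_union_le (C.image Sum.inl) (D.biUnion f)
    have h2 : (D.biUnion f).card ≤ ∑ e ∈ D, (f e).card := Finset.card_biUnion_le (t := f)
    have h3 : ∑ e ∈ D, (f e).card ≤ ∑ e ∈ D, k e :=
      Finset.sum_le_sum (fun e _ => le_trans Finset.card_image_le (by simp))
    have h4 : (C.image (Sum.inl : V → V ⊕ ((V × V) × ℕ))).card ≤ C.card := Finset.card_image_le
    omega

lemma bwd_aux {V : Type*} [Fintype V] [DecidableEq V] (G : SimpleGraph V)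
    (D : Finset (V × V))
    (hD : ∀ u v, G.Adj u v ↔ ((u, v) ∈ D ∨ (v, u) ∈ D))
    (hD1 : ∀ p ∈ D, p.1 ≠ p.2) (hD2 : ∀ p ∈ D, (p.2, p.1) ∉ D)
    (k : V × V → ℕ) (m : ℕ) (hm : m = ∑ p ∈ D, k p) (kk : ℕ)
    (h : ∃ C : Finset (V ⊕ ((V × V) × ℕ)),
        _root_.IsVertexCover (subdivGraph D k) C ∧ C.card ≤ kk + m) :
    (∃ C : Finset V, _root_.IsVertexCover G C ∧ C.card ≤ kk) := by
  classical
  obtain ⟨C', hC', hcard⟩ := h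
  set CV : Finset V := Finset.univ.filter
    (fun v => (Sum.inl v : V ⊕ ((V × V) × ℕ)) ∈ C') with hCV
  set p : V × V → Prop := fun e => 0 < k e ∧ (Sum.inl e.1 : V ⊕ ((V × V) × ℕ)) ∉ C' ∧
    (Sum.inl e.2 : V ⊕ ((V × V) × ℕ)) ∉ C' with hp
  set Bad : Finset (V × V) := D.filter p with hBad
  refine ⟨CV ∪ Bad.image Prod.fst, ?_, ?_⟩
  · -- vertex cover
    have main : ∀ w x, (w, x) ∈ D → w ∈ CV ∪ Bad.image Prod.fst ∨
        x ∈ CV ∪ Bad.image Prod.fst := by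
      intro w x hwx
      by_cases hw : (Sum.inl w : V ⊕ ((V × V) × ℕ)) ∈ C'
      · exact Or.inl (Finset.mem_union.2 (Or.inl (Finset.mem_filter.2 ⟨Finset.mem_univ _, hw⟩)))
      by_cases hx : (Sum.inl x : V ⊕ ((V × V) × ℕ)) ∈ C'
      · exact Or.inr (Finset.mem_union.2 (Or.inl (Finset.mem_filter.2 ⟨Finset.mem_univ _, hx⟩)))
      by_cases hk : k (w, x) = 0
      · -- edge kept, must be covered: contradiction
        have hadj : (subdivGraph D k).Adj (Sum.inl w) (Sum.inl x) := by
          rw [subdivGraph, SimpleGraph.fromRel_adj]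
          exact ⟨fun hh => hD1 _ hwx (Sum.inl.inj hh), Or.inl ⟨hwx, hk⟩⟩
        obtain h1 | h1 := hC' _ _ hadj
        · exact absurd h1 hw
        · exact absurd h1 hx
      · left
        refine Finset.mem_union.2 (Or.inr (Finset.mem_image.2 ⟨(w, x), ?_, rfl⟩))
        refine Finset.mem_filter.2 ⟨hwx, ?_⟩
        rw [hp]
        exact ⟨by omega, hw, hx⟩
    intro u v huv
    obtain h | h := (hD u v).1 huv
    · exact main u v h
    · exact (main v u h).symm
  · -- cardinality
    set S : (V × V) → Finset ℕ := fun e =>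
      (Finset.range (2 * k e)).filter
        (fun i => (Sum.inr (e, i) : V ⊕ ((V × V) × ℕ)) ∈ C') with hS
    set F : (V × V) → Finset (V ⊕ ((V × V) × ℕ)) := fun e =>
      (S e).image (fun i => Sum.inr (e, i)) with hF
    have hSsub : ∀ e, ∀ x ∈ S e, x < 2 * k e := by
      intro e x hx
      exact Finset.mem_range.1 (Finset.mem_filter.1 hx).1
    have hScov : ∀ e ∈ D, ∀ i, i + 1 < 2 * k e → i ∈ S e ∨ i + 1 ∈ S e := by
      intro e he i hi
      have hadj : (subdivGraph D k).Adj (Sum.inr (e, i)) (Sum.inr (e, i + 1)) := by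
        rw [subdivGraph, SimpleGraph.fromRel_adj]
        refine ⟨?_, Or.inl ⟨rfl, he, rfl, hi⟩⟩
        intro hcon
        have h2 : i = i + 1 := congrArg Prod.snd (Sum.inr.inj hcon)
        omega
      obtain h1 | h1 := hC' _ _ hadj
      · left
        rw [hS]
        exact Finset.mem_filter.2 ⟨Finset.mem_range.2 (by omega), h1⟩
      · right
        rw [hS]
        exact Finset.mem_filter.2 ⟨Finset.mem_range.2 hi, h1⟩
    have hSle : ∀ e ∈ D, k e ≤ (S e).card := by
      intro e he
      have h2 := pathA (S e) (2 * k e) (hScov e he)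
      rw [Finset.filter_true_of_mem (fun x hx => hSsub e x hx)] at h2
      omega
    have hSbad : ∀ e ∈ D, p e → k e + 1 ≤ (S e).card := by
      intro e he hpe
      rw [hp] at hpe
      obtain ⟨hk, h1, h2⟩ := hpe
      obtain ⟨t, ht⟩ : ∃ t, k e = t + 1 := ⟨k e - 1, by omega⟩
      have h0 : 0 ∈ S e := by
        have hadj : (subdivGraph D k).Adj (Sum.inl e.1) (Sum.inr (e, 0)) := by
          rw [subdivGraph, SimpleGraph.fromRel_adj]
          exact ⟨by simp, Or.inl ⟨he, by omega, Or.inl ⟨rfl, rfl⟩⟩⟩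
        obtain hh | hh := hC' _ _ hadj
        · exact absurd hh h1
        · rw [hS]
          exact Finset.mem_filter.2 ⟨Finset.mem_range.2 (by omega), hh⟩
      have hlast : 2 * t + 1 ∈ S e := by
        have hadj : (subdivGraph D k).Adj (Sum.inl e.2) (Sum.inr (e, 2 * t + 1)) := by
          rw [subdivGraph, SimpleGraph.fromRel_adj]
          exact ⟨by simp, Or.inl ⟨he, by omega, Or.inr ⟨rfl, by omega⟩⟩⟩
        obtain hh | hh := hC' _ _ hadj
        · exact absurd hh h2
        · rw [hS]
          exact Finset.mem_filter.2 ⟨Finset.mem_range.2 (by omega), hh⟩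
      have hB := pathB t (S e) (fun i hi => hScov e he i (by omega)) h0 hlast
      rw [Finset.filter_true_of_mem (fun x hx => by have := hSsub e x hx; omega)] at hB
      omega
    have hsum : ∑ e ∈ D, (k e + if p e then 1 else 0) ≤ ∑ e ∈ D, (S e).card := by
      refine Finset.sum_le_sum (fun e he => ?_)
      by_cases hpe : p e
      · rw [if_pos hpe]
        exact hSbad e he hpe
      · rw [if_neg hpe]
        have := hSle e he
        omega
    have hBadcard : Bad.card = ∑ e ∈ D, if p e then 1 else 0 := by
      rw [hBad]
      exact Finset.card_filter _ _
    have hsplit : ∑ e ∈ D, (k e + if p e then 1 else 0) =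
        (∑ e ∈ D, k e) + ∑ e ∈ D, if p e then 1 else 0 := Finset.sum_add_distrib
    -- the subset T of C'
    have hinj : ∀ e : V × V, Function.Injective
        (fun i : ℕ => (Sum.inr (e, i) : V ⊕ ((V × V) × ℕ))) := by
      intro e a b hab
      simpa using hab
    have hTsub : CV.image Sum.inl ∪ D.biUnion F ⊆ C' := by
      intro a ha
      rcases Finset.mem_union.1 ha with ha | ha
      · obtain ⟨v, hv, rfl⟩ := Finset.mem_image.1 ha
        rw [hCV] at hv
        exact (Finset.mem_filter.1 hv).2
      · obtain ⟨e, he, hae⟩ := Finset.mem_biUnion.1 ha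
        rw [hF] at hae
        obtain ⟨i, hi, rfl⟩ := Finset.mem_image.1 hae
        rw [hS] at hi
        exact (Finset.mem_filter.1 hi).2
    have hTcard : CV.card + ∑ e ∈ D, (S e).card ≤ (CV.image Sum.inl ∪ D.biUnion F).card := by
      rw [Finset.card_union_of_disjoint, Finset.card_image_of_injective _ Sum.inl_injective,
        Finset.card_biUnion]
      · refine Nat.add_le_add_left (Finset.sum_le_sum (fun e he => ?_)) _
        rw [hF, Finset.card_image_of_injective _ (hinj e)]
      · intro x hx y hy hxy
        rw [Function.onFun, Finset.disjoint_left]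
        intro a hax hay
        rw [hF] at hax hay
        obtain ⟨i, hi, rfl⟩ := Finset.mem_image.1 hax
        obtain ⟨j, hj, hji⟩ := Finset.mem_image.1 hay
        exact hxy ((congrArg Prod.fst (Sum.inr.inj hji)).symm)
      · rw [Finset.disjoint_left]
        intro a hax hay
        obtain ⟨v, hv, rfl⟩ := Finset.mem_image.1 hax
        obtain ⟨e, he, hae⟩ := Finset.mem_biUnion.1 hay
        rw [hF] at hae
        obtain ⟨i, hi, hic⟩ := Finset.mem_image.1 hae
        exact Sum.inl_ne_inr hic.symm
    have hC'card := Finset.card_le_card hTsub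
    have hunion := Finset.card_union_le CV (Bad.image Prod.fst)
    have himg : (Bad.image Prod.fst).card ≤ Bad.card := Finset.card_image_le
    omega

theorem stmt_10 {V : Type*} [Fintype V] [DecidableEq V] (G : SimpleGraph V)
    (D : Finset (V × V))
    (hD : ∀ u v, G.Adj u v ↔ ((u, v) ∈ D ∨ (v, u) ∈ D))
    (hD1 : ∀ p ∈ D, p.1 ≠ p.2) (hD2 : ∀ p ∈ D, (p.2, p.1) ∉ D)
    (k : V × V → ℕ) (m : ℕ) (hm : m = ∑ p ∈ D, k p) (kk : ℕ) :
    (∃ C : Finset V, _root_.IsVertexCover G C ∧ C.card ≤ kk) ↔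
      (∃ C : Finset (V ⊕ ((V × V) × ℕ)),
        _root_.IsVertexCover (subdivGraph D k) C ∧ C.card ≤ kk + m) :=
  ⟨fwd_aux G D hD hD1 hD2 k m hm kk, bwd_aux G D hD hD1 hD2 k m hm kk⟩
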